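/- arXiv:2511.00727 — 3 statements merged into one kernel-verified Lean document; each statement's English description precedes it below -/
import Mathlib

section
/- Let 0 < b ≤ B and let d ≥ 1 be an integer. There exists a constant C > 0 depending only on b and B such that for every symmetric matrix A ∈ ℝ^{d×d} with b·I ⪯ A ⪯ B·I and every λ ∈ (0,1], the matrix T(λ) := λ·A + 2(1−λ)·E₁₁ is positive definite and (1−λ)·e₁ᵀ T(λ)⁻¹ e₁ ≤ C. -/
open Matrix

/-- there is a constant `C` depending only on `b, B` such that for any
symmetric matrix `A` with `b·I ⪯ A ⪯ B·I` and any `λ ∈ (0,1]`, the matrix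
`T(λ) = λ·A + 2(1−λ)·E₁₁` is positive definite and `(1−λ)·e₁ᵀ T(λ)⁻¹ e₁ ≤ C`. -/
theorem stmt12 (b B : ℝ) (hb : 0 < b) (hbB : b ≤ B) :
    ∃ C > (0 : ℝ), ∀ (d : ℕ) (hd : 0 < d) (A E11 : Matrix (Fin d) (Fin d) ℝ)
      (e1 : Fin d → ℝ),
      E11 = Matrix.single ⟨0, hd⟩ ⟨0, hd⟩ (1 : ℝ) →
      e1 = Pi.single ⟨0, hd⟩ (1 : ℝ) →
      A.IsSymm →
      (∀ v : Fin d → ℝ, b * ∑ i, v i ^ 2 ≤ v ⬝ᵥ A.mulVec v) →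
      (∀ v : Fin d → ℝ, v ⬝ᵥ A.mulVec v ≤ B * ∑ i, v i ^ 2) →
      ∀ lam : ℝ, 0 < lam → lam ≤ 1 →
        (lam • A + (2 * (1 - lam)) • E11).PosDef ∧
        (1 - lam) * (e1 ⬝ᵥ ((lam • A + (2 * (1 - lam)) • E11)⁻¹).mulVec e1) ≤ C := by
  refine ⟨1, one_pos, ?_⟩
  intro d hd A E11 e1 hE he hsymm hlow hup lam hlam hlam1
  set i0 : Fin d := ⟨0, hd⟩ with hi0
  set T : Matrix (Fin d) (Fin d) ℝ := lam • A + (2 * (1 - lam)) • E11 with hT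
  -- quadratic form of T
  have hquad : ∀ v : Fin d → ℝ,
      v ⬝ᵥ T *ᵥ v = lam * (v ⬝ᵥ A *ᵥ v) + 2 * (1 - lam) * (v i0 * v i0) := by
    intro v
    have hE11 : v ⬝ᵥ E11 *ᵥ v = v i0 * v i0 := by
      rw [hE, single_mulVec]
      simp [dotProduct, Function.update_apply, Finset.sum_ite_eq']
    rw [hT]
    simp [add_mulVec, smul_mulVec, dotProduct_add, dotProduct_smul, hE11, smul_eq_mul]
    try ring
  have hquad_lb : ∀ v : Fin d → ℝ,
      lam * (b * ∑ i, v i ^ 2) ≤ v ⬝ᵥ T *ᵥ v := by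
    intro v
    have h1 := hlow v
    have h2 : 0 ≤ 2 * (1 - lam) * (v i0 * v i0) := by
      have := mul_self_nonneg (v i0)
      nlinarith
    rw [hquad v]
    nlinarith
  have hposdef : T.PosDef := by
    rw [Matrix.posDef_iff_dotProduct_mulVec]
    constructor
    · -- Hermitian
      have hE11symm : E11.IsSymm := by
        rw [hE]
        ext i j
        simp [Matrix.transpose_apply, Matrix.single, and_comm]
      rw [Matrix.IsHermitian, hT]
      have : Tᵀ = T := by
        rw [hT, Matrix.transpose_add, Matrix.transpose_smul, Matrix.transpose_smul,
          hsymm, hE11symm]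
      exact (Matrix.conjTranspose_eq_transpose_of_trivial _).trans this
    · intro x hx
      have hsum : 0 < ∑ i, x i ^ 2 := by
        rcases Function.ne_iff.mp hx with ⟨j, hj⟩
        have : 0 < x j ^ 2 := pow_two_pos_of_ne_zero hj
        exact lt_of_lt_of_le this (Finset.single_le_sum (f := fun i => x i ^ 2)
          (fun i _ => sq_nonneg _) (Finset.mem_univ j))
      have := hquad_lb x
      have hpos : 0 < lam * (b * ∑ i, x i ^ 2) := mul_pos hlam (mul_pos hb hsum)
      simpa [star, dotProduct] using lt_of_lt_of_le hpos this
  refine ⟨hposdef, ?_⟩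
  -- invertibility
  have hdet : IsUnit T.det := hposdef.det_pos.ne'.isUnit
  have hTinv : T * T⁻¹ = 1 := Matrix.mul_nonsing_inv T hdet
  set u : Fin d → ℝ := T⁻¹ *ᵥ e1 with hu
  have hTu : T *ᵥ u = e1 := by
    rw [hu, mulVec_mulVec, hTinv, one_mulVec]
  set s : ℝ := e1 ⬝ᵥ u with hs
  have hs_eq : s = u ⬝ᵥ T *ᵥ u := by
    rw [hTu, hs, dotProduct_comm]
  have hsu : s = u i0 := by
    rw [hs, he, single_dotProduct, one_mul]
  have h1 : lam * (b * ∑ i, u i ^ 2) ≤ s := by rw [hs_eq]; exact hquad_lb u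
  have hs_nonneg : 0 ≤ s := by
    have h4 : (0:ℝ) ≤ ∑ i, u i ^ 2 := Finset.sum_nonneg fun i _ => sq_nonneg _
    have : (0:ℝ) ≤ lam * (b * ∑ i, u i ^ 2) := mul_nonneg hlam.le (mul_nonneg hb.le h4)
    linarith
  have hkey : 2 * (1 - lam) * (s * s) ≤ s := by
    have h3 := hlow u
    have h4 : (0:ℝ) ≤ ∑ i, u i ^ 2 := Finset.sum_nonneg fun i _ => sq_nonneg _
    have hexp : s = lam * (u ⬝ᵥ A *ᵥ u) + 2 * (1 - lam) * (s * s) := by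
      conv_lhs => rw [hs_eq, hquad u]
      rw [← hsu]
    have h5 : (0:ℝ) ≤ lam * (u ⬝ᵥ A *ᵥ u) :=
      mul_nonneg hlam.le (le_trans (mul_nonneg hb.le h4) h3)
    linarith
  -- conclude
  have : (1 - lam) * s ≤ 1 := by nlinarith
  simpa [hs, hu] using this
end

section
/- Let 0 < b ≤ B, let d ≥ 1 be an integer, and let T₁ ∈ ℝ^{d×d} be a symmetric matrix with b·I ⪯ T₁ ⪯ B·I. For every λ ∈ (0,1] and every ε ≥ 0, the matrix M := λ·T₁ + (1−λ)·(ε·I + (2−ε)·E₁₁) is positive definite and ‖(1−λ)·M⁻¹ e₁‖₂ ≤ (1 + B/b)/2. -/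
open Matrix

set_option maxHeartbeats 1600000

/-- if `T₁` is symmetric with `b·I ⪯ T₁ ⪯ B·I`, then for every `λ ∈ (0,1]`
and `ε ≥ 0`, the matrix `M = λ·T₁ + (1−λ)·(ε·I + (2−ε)·E₁₁)` is positive definite and
`‖(1−λ)·M⁻¹ e₁‖₂ ≤ (1 + B/b)/2`. -/
theorem stmt13 (b B : ℝ) (hb : 0 < b) (hbB : b ≤ B)
    (d : ℕ) (hd : 0 < d) (T1 E11 : Matrix (Fin d) (Fin d) ℝ) (e1 : Fin d → ℝ)
    (hE11 : E11 = single ⟨0, hd⟩ ⟨0, hd⟩ (1 : ℝ))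
    (he1 : e1 = Pi.single ⟨0, hd⟩ (1 : ℝ))
    (hsymm : T1.IsSymm)
    (hlow : ∀ v : Fin d → ℝ, b * ∑ i, v i ^ 2 ≤ v ⬝ᵥ T1.mulVec v)
    (hup : ∀ v : Fin d → ℝ, v ⬝ᵥ T1.mulVec v ≤ B * ∑ i, v i ^ 2) :
    ∀ lam : ℝ, 0 < lam → lam ≤ 1 → ∀ ε : ℝ, 0 ≤ ε →
      (lam • T1 + (1 - lam) • (ε • (1 : Matrix (Fin d) (Fin d) ℝ) + (2 - ε) • E11)).PosDef ∧
      Real.sqrt (∑ i, ((1 - lam) *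
          ((lam • T1 + (1 - lam) • (ε • (1 : Matrix (Fin d) (Fin d) ℝ) + (2 - ε) • E11))⁻¹).mulVec
            e1 i) ^ 2)
        ≤ (1 + B / b) / 2 := by
  intro lam hlam0 hlam1 ε hε
  set i0 : Fin d := ⟨0, hd⟩ with hi0
  set M : Matrix (Fin d) (Fin d) ℝ :=
    lam • T1 + (1 - lam) • (ε • (1 : Matrix (Fin d) (Fin d) ℝ) + (2 - ε) • E11) with hMdef
  have h1lam : 0 ≤ 1 - lam := by linarith
  -- the quadratic form of M
  have hquad : ∀ v : Fin d → ℝ,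
      v ⬝ᵥ M *ᵥ v
        = lam * (v ⬝ᵥ T1 *ᵥ v) + (1 - lam) * (ε * (∑ i, v i ^ 2) + (2 - ε) * (v i0) ^ 2) := by
    intro v
    have hvv : v ⬝ᵥ v = ∑ i, v i ^ 2 := by simp [dotProduct, sq]
    have hE : v ⬝ᵥ E11 *ᵥ v = v i0 * v i0 := by
      rw [hE11, single_mulVec]
      simp [dotProduct, Function.update_apply, mul_ite, Finset.sum_ite_eq']
    rw [hMdef]
    simp only [add_mulVec, smul_mulVec, one_mulVec, dotProduct_add, dotProduct_smul,
      smul_eq_mul, hvv, hE]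
    ring
  -- lower bound on the quadratic form
  have hlb : ∀ v : Fin d → ℝ,
      lam * (b * ∑ i, v i ^ 2) + 2 * (1 - lam) * (v i0) ^ 2 ≤ v ⬝ᵥ M *ᵥ v := by
    intro v
    have h1 := hlow v
    have hsum : (v i0) ^ 2 ≤ ∑ i, v i ^ 2 :=
      Finset.single_le_sum (fun i _ => sq_nonneg (v i)) (Finset.mem_univ i0)
    have t1 : 0 ≤ lam * (v ⬝ᵥ T1 *ᵥ v - b * ∑ i, v i ^ 2) :=
      mul_nonneg hlam0.le (by linarith)
    have t2 : 0 ≤ (1 - lam) * (ε * ((∑ i, v i ^ 2) - (v i0) ^ 2)) :=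
      mul_nonneg h1lam (mul_nonneg hε (by linarith))
    rw [hquad v]
    nlinarith [t1, t2]
  have hsum_pos : ∀ v : Fin d → ℝ, v ≠ 0 → 0 < ∑ i, v i ^ 2 := by
    intro v hv
    rcases Function.ne_iff.mp hv with ⟨i, hi⟩
    exact Finset.sum_pos' (fun j _ => sq_nonneg _)
      ⟨i, Finset.mem_univ i, by rw [sq]; exact mul_self_pos.mpr hi⟩
  -- symmetry of M
  have hE11symm : E11ᵀ = E11 := by
    rw [hE11]; ext i j
    simp only [transpose_apply, single, of_apply]
    by_cases h1 : i0 = i <;> by_cases h2 : i0 = j <;> simp [h1, h2]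
  have hMH : M.IsHermitian := by
    rw [Matrix.IsHermitian, conjTranspose_eq_transpose_of_trivial, hMdef]
    simp [transpose_add, transpose_smul, transpose_one, hsymm.eq, hE11symm]
  have hstar : ∀ v : Fin d → ℝ, star v = v := fun v => by ext i; simp
  -- positive definiteness
  have hMpd : M.PosDef := by
    refine Matrix.PosDef.of_dotProduct_mulVec_pos hMH (fun x hx => ?_)
    rw [hstar x]
    have := hlb x
    have hpos := hsum_pos x hx
    nlinarith [sq_nonneg (x i0), mul_pos hlam0 (mul_pos hb hpos)]
  refine ⟨hMpd, ?_⟩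
  -- the vector u = M⁻¹ e1
  set u : Fin d → ℝ := M⁻¹ *ᵥ e1 with hu
  have hdet : IsUnit M.det := hMpd.det_pos.ne'.isUnit
  have hMu : M *ᵥ u = e1 := by
    rw [hu, mulVec_mulVec, Matrix.mul_nonsing_inv _ hdet, one_mulVec]
  have hu0 : u ≠ 0 := by
    intro h
    rw [h, mulVec_zero] at hMu
    have := congrFun hMu i0
    simp [he1] at this
  set x1 : ℝ := u i0 with hx1
  set S : ℝ := ∑ i, u i ^ 2 with hS
  have hux : u ⬝ᵥ M *ᵥ u = x1 := by
    rw [hMu, he1, dotProduct_single, mul_one]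
  have hx1pos : 0 < x1 := by
    have := hMpd.dotProduct_mulVec_pos hu0
    rwa [hstar u, hux] at this
  -- Cauchy–Schwarz step : 1 ≤ A * x1, where A = e1ᵀ M e1
  have hMT : Mᵀ = M := by
    rw [← conjTranspose_eq_transpose_of_trivial]; exact hMH
  have hMsymm : ∀ v w : Fin d → ℝ, v ⬝ᵥ M *ᵥ w = w ⬝ᵥ M *ᵥ v := by
    intro v w
    rw [Matrix.dotProduct_mulVec, ← mulVec_transpose, hMT, dotProduct_comm]
  set A : ℝ := e1 ⬝ᵥ M *ᵥ e1 with hA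
  have he1Mu : e1 ⬝ᵥ M *ᵥ u = 1 := by
    rw [hMu, he1, dotProduct_single, mul_one, Pi.single_eq_same]
  have huMe1 : u ⬝ᵥ M *ᵥ e1 = 1 := by rw [hMsymm]; exact he1Mu
  have hexp : (x1 • e1 - u) ⬝ᵥ M *ᵥ (x1 • e1 - u) = x1 ^ 2 * A - x1 := by
    rw [mulVec_sub, mulVec_smul]
    simp only [dotProduct_sub, sub_dotProduct, dotProduct_smul, smul_dotProduct, smul_eq_mul,
      he1Mu, huMe1, hux, hA]
    ring
  have hCS : 1 ≤ A * x1 := by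
    have h0 : 0 ≤ (x1 • e1 - u) ⬝ᵥ M *ᵥ (x1 • e1 - u) := by
      have := hMpd.posSemidef.dotProduct_mulVec_nonneg (x1 • e1 - u)
      rwa [hstar _] at this
    rw [hexp] at h0
    nlinarith [hx1pos]
  -- bound A ≤ D
  have hSe1 : (∑ i, e1 i ^ 2) = 1 := by
    have h : (∑ i, e1 i ^ 2) = e1 ⬝ᵥ e1 := by simp [dotProduct, sq]
    rw [h, he1, dotProduct_single, Pi.single_eq_same, mul_one]
  have he1i0 : e1 i0 = 1 := by rw [he1, Pi.single_eq_same]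
  set D : ℝ := lam * B + 2 * (1 - lam) with hD
  have hDpos : 0 < D := by nlinarith [mul_pos hlam0 (lt_of_lt_of_le hb hbB)]
  have hA_le : A ≤ D := by
    have hT := hup e1
    rw [hSe1, mul_one] at hT
    rw [hA, hquad e1, hSe1, he1i0]
    nlinarith [mul_le_mul_of_nonneg_left hT hlam0.le]
  have hDx1 : 1 ≤ D * x1 := le_trans hCS (by nlinarith)
  -- the key inequalities
  have hF1 : lam * (b * S) + 2 * (1 - lam) * x1 ^ 2 ≤ x1 := by
    have := hlb u
    rwa [hux] at this
  have hx1S : x1 ^ 2 ≤ S :=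
    Finset.single_le_sum (fun i _ => sq_nonneg (u i)) (Finset.mem_univ i0)
  have hS0 : 0 ≤ S := le_trans (sq_nonneg x1) hx1S
  set s : ℝ := Real.sqrt S with hs
  have hs0 : 0 ≤ s := by rw [hs]; exact Real.sqrt_nonneg S
  have hs2 : s ^ 2 = S := by rw [hs]; exact Real.sq_sqrt hS0
  clear_value s S x1 u A D M
  clear hquad hlb hsum_pos hMH hstar hMsymm hexp hCS
  have hx1s : x1 ≤ s := by nlinarith [hx1pos, hs0, hs2, hx1S]
  -- derive  b * S * D ≤ B * x1
  have hstep : b * S * D ≤ B * x1 := by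
    have h1 : lam * (b * S) * D ≤ (x1 - 2 * (1 - lam) * x1 ^ 2) * D :=
      mul_le_mul_of_nonneg_right (by linarith) hDpos.le
    have h2 : (x1 - 2 * (1 - lam) * x1 ^ 2) * D ≤ x1 * (lam * B) := by
      have key : 0 ≤ (1 - lam) * x1 * (D * x1 - 1) :=
        mul_nonneg (mul_nonneg h1lam hx1pos.le) (by linarith)
      nlinarith [key]
    have h3 : lam * (b * S * D) ≤ lam * (B * x1) := by nlinarith [h1, h2]
    exact le_of_mul_le_mul_left h3 hlam0
  -- conclude (1-lam) * s ≤ (1 + B/b)/2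
  have hmain : (1 - lam) * s ≤ (1 + B / b) / 2 := by
    rcases eq_or_lt_of_le hs0 with h0 | hspos
    · rw [← h0, mul_zero]
      have hBb0 : 0 ≤ B / b := div_nonneg (by linarith) hb.le
      linarith
    · have hbsD : b * s * D ≤ B := by
        have : b * (s ^ 2) * D ≤ B * s := le_trans (by rw [hs2]) (by
          calc b * S * D ≤ B * x1 := hstep
            _ ≤ B * s := by nlinarith [lt_of_lt_of_le hb hbB, hx1s])
        nlinarith [hspos]
      have hB0 : 0 < B := lt_of_lt_of_le hb hbB
      have h2b : 2 * b * ((1 - lam) * s) ≤ B := by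
        nlinarith [hbsD, mul_nonneg (mul_nonneg hb.le hs0) (mul_nonneg hlam0.le hB0.le)]
      have hfin : (1 - lam) * s ≤ B / b / 2 := by
        rw [div_div, le_div_iff₀ (by positivity : (0:ℝ) < b * 2)]
        nlinarith [h2b]
      have hBb : (0:ℝ) ≤ B / b := by positivity
      calc (1 - lam) * s ≤ B / b / 2 := hfin
        _ ≤ (1 + B / b) / 2 := by linarith
  -- rewrite the goal
  have hgoal_eq : (∑ i, ((1 - lam) * u i) ^ 2) = (1 - lam) ^ 2 * S := by
    rw [hS, Finset.mul_sum]
    exact Finset.sum_congr rfl fun i _ => by ring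
  rw [hgoal_eq]
  rw [Real.sqrt_mul (sq_nonneg _), Real.sqrt_sq h1lam, ← hs]
  exact hmain
end

section
/- Let 𝖧 ⊆ ℝ^d be a convex set, let H : ℝ^d → ℝ^d be continuously differentiable on 𝖧, and let η* ∈ 𝖧 with H(η*) = 0. Assume: (i) ⟨∇H(η)·v, v⟩ ≥ 0 for all η ∈ 𝖧 and all v ∈ ℝ^d; (ii) ⟨∇H(η*)·v, v⟩ ≥ γ‖v‖₂² for all v ∈ ℝ^d, for some constant γ > 0; and (iii) ‖∇H(η) − ∇H(η')‖_op ≤ B₂·‖η − η'‖₂ for all η, η' ∈ 𝖧, for some constant B₂ > 0. Then for every η ∈ 𝖧: if ‖η − η*‖₂ ≤ γ/(2B₂) then ⟨H(η), η − η*⟩ ≥ (γ/2)·‖η − η*‖₂², while if ‖η − η*‖₂ > γ/(2B₂) then ⟨H(η), η − η*⟩ ≥ (γ²/(4B₂))·‖η − η*‖₂. -/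
open scoped RealInnerProductSpace

set_option maxHeartbeats 1000000 in
/-- if `H` vanishes at `η* ∈ Hset`, its Jacobian is positive semidefinite on
the convex set `Hset`, is `γ`-positive definite at `η*`, and is `B₂`-Lipschitz on `Hset`, then
`⟨H(η), η − η*⟩ ≥ (γ/2)‖η − η*‖²` when `‖η − η*‖ ≤ γ/(2B₂)`, and
`⟨H(η), η − η*⟩ ≥ (γ²/(4B₂))‖η − η*‖` when `‖η − η*‖ > γ/(2B₂)`. -/
theorem stmt14 (d : ℕ) (hd : 0 < d)
    (Hset : Set (EuclideanSpace ℝ (Fin d))) (hconv : Convex ℝ Hset)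
    (H : EuclideanSpace ℝ (Fin d) → EuclideanSpace ℝ (Fin d))
    (hdiff : ∀ η ∈ Hset, DifferentiableAt ℝ H η)
    (ηstar : EuclideanSpace ℝ (Fin d)) (hηstar : ηstar ∈ Hset) (hH0 : H ηstar = 0)
    (γ B₂ : ℝ) (hγ : 0 < γ) (hB₂ : 0 < B₂)
    (hpsd : ∀ η ∈ Hset, ∀ v : EuclideanSpace ℝ (Fin d), 0 ≤ ⟪fderiv ℝ H η v, v⟫)
    (hpd : ∀ v : EuclideanSpace ℝ (Fin d), γ * ‖v‖ ^ 2 ≤ ⟪fderiv ℝ H ηstar v, v⟫)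
    (hlip : ∀ η ∈ Hset, ∀ η' ∈ Hset, ‖fderiv ℝ H η - fderiv ℝ H η'‖ ≤ B₂ * ‖η - η'‖) :
    ∀ η ∈ Hset,
      (‖η - ηstar‖ ≤ γ / (2 * B₂) → γ / 2 * ‖η - ηstar‖ ^ 2 ≤ ⟪H η, η - ηstar⟫) ∧
      (γ / (2 * B₂) < ‖η - ηstar‖ → γ ^ 2 / (4 * B₂) * ‖η - ηstar‖ ≤ ⟪H η, η - ηstar⟫) := by
  intro η hη
  set v : EuclideanSpace ℝ (Fin d) := η - ηstar with hv
  set r : ℝ := ‖v‖ with hrdef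
  have hr0 : 0 ≤ r := norm_nonneg _
  set L : ℝ → EuclideanSpace ℝ (Fin d) := fun t => ηstar + t • v with hL
  have hmem : ∀ t ∈ Set.Icc (0:ℝ) 1, L t ∈ Hset := by
    intro t ht
    have h := hconv hηstar hη (by linarith [ht.2] : (0:ℝ) ≤ 1 - t) ht.1 (by ring)
    convert h using 1
    simp only [hL, hv]
    module
  set φ : ℝ → ℝ := fun t => ⟪v, H (L t)⟫ with hφ
  have hderiv : ∀ t ∈ Set.Icc (0:ℝ) 1, HasDerivAt φ (⟪fderiv ℝ H (L t) v, v⟫) t := by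
    intro t ht
    have hL' : HasDerivAt L v t := by
      have h1 : HasDerivAt (fun s : ℝ => s • v) ((1:ℝ) • v) t := (hasDerivAt_id t).smul_const v
      have h2 := h1.const_add ηstar
      rw [one_smul] at h2
      exact h2
    have hH : HasFDerivAt H (fderiv ℝ H (L t)) (L t) := (hdiff _ (hmem t ht)).hasFDerivAt
    have hcomp := hH.comp_hasDerivAt t hL'
    have h2 : HasDerivAt φ ⟪v, fderiv ℝ H (L t) v⟫ t :=
      (innerSL ℝ v).hasFDerivAt.comp_hasDerivAt t hcomp
    rwa [real_inner_comm] at h2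
  have hdlb : ∀ t ∈ Set.Icc (0:ℝ) 1,
      γ * r ^ 2 - B₂ * r ^ 3 * t ≤ ⟪fderiv ℝ H (L t) v, v⟫ := by
    intro t ht
    set A := fderiv ℝ H (L t) - fderiv ℝ H ηstar with hA
    have hAv' : A v = fderiv ℝ H (L t) v - fderiv ℝ H ηstar v := rfl
    have hsplit : ⟪fderiv ℝ H (L t) v, v⟫ = ⟪fderiv ℝ H ηstar v, v⟫ + ⟪A v, v⟫ := by
      rw [hAv', inner_sub_left]; ring
    have hAnorm : ‖A‖ ≤ B₂ * (t * r) := by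
      have h := hlip (L t) (hmem t ht) ηstar hηstar
      have hLt : L t - ηstar = t • v := by simp [hL]
      rw [hLt, norm_smul, Real.norm_eq_abs, abs_of_nonneg ht.1] at h
      exact h
    have hAv : |⟪A v, v⟫| ≤ B₂ * (t * r) * (r * r) := by
      calc |⟪A v, v⟫| ≤ ‖A v‖ * ‖v‖ := abs_real_inner_le_norm _ _
        _ ≤ (‖A‖ * ‖v‖) * ‖v‖ := by
            gcongr
            exact A.le_opNorm v
        _ ≤ (B₂ * (t * r)) * (r * r) := by
            rw [← hrdef, mul_assoc]
            gcongr
    have h3 := hpd v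
    have h4 := neg_abs_le ⟪A v, v⟫
    rw [hsplit]
    nlinarith [h3, hAv, h4]
  have hφ0 : φ 0 = 0 := by simp [hφ, hL, hH0]
  have hL1 : L 1 = η := by simp [hL, hv]
  have hgoal : ⟪H η, η - ηstar⟫ = φ 1 := by
    show ⟪H η, η - ηstar⟫ = ⟪v, H (L 1)⟫
    rw [hL1, hv, real_inner_comm]
  have key : ∀ b ∈ Set.Icc (0:ℝ) 1, γ * r ^ 2 * b - B₂ * r ^ 3 * b ^ 2 / 2 ≤ φ b := by
    intro b hb
    set g : ℝ → ℝ := fun t => φ t - (γ * r ^ 2 * t - B₂ * r ^ 3 * t ^ 2 / 2) with hg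
    have hsub : Set.Icc (0:ℝ) b ⊆ Set.Icc (0:ℝ) 1 :=
      Set.Icc_subset_Icc le_rfl hb.2
    have hgd : ∀ t ∈ Set.Icc (0:ℝ) b,
        HasDerivAt g (⟪fderiv ℝ H (L t) v, v⟫ - (γ * r ^ 2 - B₂ * r ^ 3 * t)) t := by
      intro t ht
      have h1 := hderiv t (hsub ht)
      have h2 : HasDerivAt (fun t : ℝ => γ * r ^ 2 * t - B₂ * r ^ 3 * t ^ 2 / 2)
          (γ * r ^ 2 - B₂ * r ^ 3 * t) t := by
        have ha : HasDerivAt (fun t : ℝ => γ * r ^ 2 * t) (γ * r ^ 2) t := by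
          simpa using (hasDerivAt_id t).const_mul (γ * r ^ 2)
        have hb' : HasDerivAt (fun t : ℝ => B₂ * r ^ 3 * t ^ 2 / 2) (B₂ * r ^ 3 * t) t := by
          have := ((hasDerivAt_pow 2 t).const_mul (B₂ * r ^ 3)).div_const 2
          exact this.congr_deriv (by ring)
        exact ha.sub hb'
      exact h1.sub h2
    have hmono : MonotoneOn g (Set.Icc 0 b) := by
      apply monotoneOn_of_deriv_nonneg (convex_Icc 0 b)
      · exact fun t ht => (hgd t ht).continuousAt.continuousWithinAt
      · intro t ht
        exact ((hgd t (interior_subset ht)).differentiableAt).differentiableWithinAt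
      · intro t ht
        rw [(hgd t (interior_subset ht)).deriv]
        have := hdlb t (hsub (interior_subset ht))
        linarith
    have h0b : g 0 ≤ g b := hmono ⟨le_rfl, hb.1⟩ ⟨hb.1, le_rfl⟩ hb.1
    have hg0 : g 0 = 0 := by simp [hg, hφ0]
    rw [hg0] at h0b
    simp only [hg, sub_nonneg] at h0b
    linarith
  constructor
  · -- case 1
    intro hsmall
    have h1 := key 1 ⟨zero_le_one, le_rfl⟩
    rw [hgoal]
    have h2 : r * (2 * B₂) ≤ γ := by
      have := (le_div_iff₀ (by positivity : (0:ℝ) < 2 * B₂)).mp hsmall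
      linarith
    nlinarith [h1, hr0, sq_nonneg r]
  · -- case 2
    intro hbig
    have hrpos : 0 < r := lt_trans (by positivity) hbig
    have h2br : γ < 2 * B₂ * r := by
      rw [div_lt_iff₀ (by positivity : (0:ℝ) < 2 * B₂)] at hbig
      linarith
    set s : ℝ := γ / (2 * B₂ * r) with hs
    have hs0 : 0 < s := by positivity
    have hs1 : s < 1 := by
      rw [hs, div_lt_one (by positivity)]
      exact h2br
    have hkey := key s ⟨hs0.le, hs1.le⟩
    have hmono : MonotoneOn φ (Set.Icc s 1) := by
      apply monotoneOn_of_deriv_nonneg (convex_Icc s 1)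
      · intro t ht
        exact (hderiv t ⟨hs0.le.trans ht.1, ht.2⟩).continuousAt.continuousWithinAt
      · intro t ht
        have ht' := interior_subset ht
        exact ((hderiv t ⟨hs0.le.trans ht'.1, ht'.2⟩).differentiableAt).differentiableWithinAt
      · intro t ht
        have ht' := interior_subset ht
        have htIcc : t ∈ Set.Icc (0:ℝ) 1 := ⟨hs0.le.trans ht'.1, ht'.2⟩
        rw [(hderiv t htIcc).deriv]
        exact hpsd _ (hmem t htIcc) v
    have hφs : φ s ≤ φ 1 := hmono ⟨le_rfl, hs1.le⟩ ⟨hs1.le, le_rfl⟩ hs1.le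
    rw [hgoal]
    have hval : γ * r ^ 2 * s - B₂ * r ^ 3 * s ^ 2 / 2 = 3 * γ ^ 2 * r / (8 * B₂) := by
      rw [hs]
      field_simp
      ring
    rw [hval] at hkey
    have hfin : γ ^ 2 / (4 * B₂) * r ≤ 3 * γ ^ 2 * r / (8 * B₂) := by
      rw [div_mul_eq_mul_div, div_le_div_iff₀ (by positivity) (by positivity)]
      nlinarith [sq_nonneg γ, hr0]
    linarith
end
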